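/- Let f(x) = 1 − |x| for −1 ≤ x ≤ 1 and f(x) = 0 otherwise. For all integers h, A and d ≥ 1 and every real M > 0, one has Σ_{m ∈ ℤ} e(h·(A+m)²/d)·f(m/M) = (M/d)·Σ_{k ∈ ℤ} (sin(π·k·M/d)/(π·k·M/d))²·e(−k·A/d)·G(h, k; d), where the factor (sin(π·k·M/d)/(π·k·M/d))² is interpreted as 1 when k·M/d = 0, both sums converge absolutely, and G(a, b; q) := Σ_{n mod q} e((a·n² + b·n)/q) denotes the Gauss sum. -/

import Mathlib

open scoped Real

/-- `e(u) = e^{2πiu}`. -/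
noncomputable def eu (u : ℝ) : ℂ := Complex.exp (2 * Real.pi * Complex.I * u)

/-- The Gauss sum `G(a, b; q) = Σ_{n mod q} e((a n² + b n)/q)`. -/
noncomputable def gaussSum' (a b : ℤ) (q : ℕ) : ℂ :=
  ∑ n ∈ Finset.range q, eu (((a * n ^ 2 + b * n : ℤ) : ℝ) / q)

/-- The triangle function: `1 - |x|` on `[-1, 1]`, and `0` elsewhere. -/
noncomputable def triangle (x : ℝ) : ℝ := if |x| ≤ 1 then 1 - |x| else 0

/-- `(sin(πx)/(πx))²`, interpreted as `1` at `x = 0`. -/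
noncomputable def sincSq (x : ℝ) : ℝ :=
  if x = 0 then 1 else (Real.sin (Real.pi * x) / (Real.pi * x)) ^ 2

lemma eu_add (a b : ℝ) : eu (a + b) = eu a * eu b := by
  simp [eu, mul_add, Complex.exp_add]

lemma eu_int (z : ℤ) : eu z = 1 := by
  rw [eu, show (2 * Real.pi * Complex.I * (z:ℝ) : ℂ) = (z:ℂ) * (2 * Real.pi * Complex.I) by push_cast; ring]
  exact Complex.exp_int_mul_two_pi_mul_I z

lemma eu_add_int (a : ℝ) (z : ℤ) : eu (a + z) = eu a := by
  rw [eu_add, eu_int, mul_one]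

lemma eu_norm (u : ℝ) : ‖eu u‖ = 1 := by
  rw [eu, show (2 * Real.pi * Complex.I * (u:ℝ) : ℂ) = ((2 * Real.pi * u : ℝ) : ℂ) * Complex.I by push_cast; ring]
  exact Complex.norm_exp_ofReal_mul_I _

lemma triangle_eq (x : ℝ) : triangle x = max (1 - |x|) 0 := by
  rw [triangle]
  rcases le_or_gt |x| 1 with h | h
  · rw [if_pos h, max_eq_left (by linarith)]
  · rw [if_neg (not_le.2 h), max_eq_right (by linarith)]

lemma continuous_triangle : Continuous triangle := by
  simp only [funext triangle_eq]
  fun_prop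

lemma triangle_zero_of_one_le {x : ℝ} (hx : 1 ≤ |x|) : triangle x = 0 := by
  rw [triangle_eq, max_eq_right (by linarith)]

lemma sincSq_nonneg (x : ℝ) : 0 ≤ sincSq x := by
  rw [sincSq]; split <;> positivity

lemma sincSq_le {x : ℝ} (hx : x ≠ 0) : sincSq x ≤ 1 / (Real.pi * x) ^ 2 := by
  rw [sincSq, if_neg hx, div_pow]
  gcongr
  exact Real.sin_sq_le_one _

lemma summable_sincSq {L : ℝ} (hL : 0 < L) : Summable (fun k : ℤ => sincSq ((k : ℝ) * L)) := by
  apply Summable.of_norm_bounded_eventually (g := fun k : ℤ => 1 / (Real.pi * L)^2 * (1 / (k:ℝ)^2))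
  · exact (Real.summable_one_div_int_pow.2 one_lt_two).mul_left _
  · filter_upwards [(Set.finite_singleton (0:ℤ)).eventually_cofinite_notMem] with k hk
    have hk0 : (k:ℝ) ≠ 0 := Int.cast_ne_zero.2 (by simpa using hk)
    have h1 : ((k:ℝ) * L) ≠ 0 := mul_ne_zero hk0 hL.ne'
    rw [Real.norm_eq_abs, abs_of_nonneg (sincSq_nonneg _)]
    calc sincSq ((k:ℝ) * L) ≤ 1 / (Real.pi * ((k:ℝ) * L)) ^ 2 := sincSq_le h1
      _ = 1 / (Real.pi * L)^2 * (1 / (k:ℝ)^2) := by field_simp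

open Complex in
lemma int_tri_right {c : ℂ} (hc : c ≠ 0) :
    ∫ x in (0:ℝ)..1, Complex.exp (c*x) * (1 - x) = (Complex.exp c - c - 1)/c^2 := by
  have key : ∀ x ∈ Set.uIcc (0:ℝ) 1, HasDerivAt
      (fun x : ℝ => Complex.exp (c*x) * (-(c*x) + (c+1)) / c^2)
      (Complex.exp (c*x) * (1 - x)) x := by
    intro x _
    have h1 : HasDerivAt (fun z : ℂ => Complex.exp (c*z) * (-(c*z) + (c+1)) / c^2)
        ((c * Complex.exp (c*x) * (-(c*(x:ℂ)) + (c+1)) + Complex.exp (c*(x:ℂ)) * (-c)) / c^2) (x:ℂ) := by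
      have he : HasDerivAt (fun z : ℂ => Complex.exp (c*z)) (c * Complex.exp (c*(x:ℂ))) (x:ℂ) := by
        simpa [mul_comm] using ((hasDerivAt_id (x:ℂ)).const_mul c).cexp
      have hp : HasDerivAt (fun z : ℂ => -(c*z) + (c+1)) (-c) (x:ℂ) := by
        simpa using (((hasDerivAt_id (x:ℂ)).const_mul c).neg).add_const (c+1)
      exact (he.mul hp).div_const (c^2)
    have := h1.comp_ofReal
    convert this using 1
    field_simp
    ring
  rw [intervalIntegral.integral_eq_sub_of_hasDerivAt key (by
    apply Continuous.intervalIntegrable; continuity)]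
  simp only [Complex.ofReal_zero, Complex.ofReal_one, mul_zero, mul_one, Complex.exp_zero]
  field_simp
  ring

open Complex in
lemma int_tri_left {c : ℂ} (hc : c ≠ 0) :
    ∫ x in (-1:ℝ)..0, Complex.exp (c*x) * (1 + x) = (c - 1 + Complex.exp (-c))/c^2 := by
  have key : ∀ x ∈ Set.uIcc (-1:ℝ) 0, HasDerivAt
      (fun x : ℝ => Complex.exp (c*x) * (c*x + (c-1)) / c^2)
      (Complex.exp (c*x) * (1 + x)) x := by
    intro x _
    have h1 : HasDerivAt (fun z : ℂ => Complex.exp (c*z) * (c*z + (c-1)) / c^2)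
        ((c * Complex.exp (c*x) * (c*(x:ℂ) + (c-1)) + Complex.exp (c*(x:ℂ)) * c) / c^2) (x:ℂ) := by
      have he : HasDerivAt (fun z : ℂ => Complex.exp (c*z)) (c * Complex.exp (c*(x:ℂ))) (x:ℂ) := by
        simpa [mul_comm] using ((hasDerivAt_id (x:ℂ)).const_mul c).cexp
      have hp : HasDerivAt (fun z : ℂ => c*z + (c-1)) c (x:ℂ) := by
        simpa using ((hasDerivAt_id (x:ℂ)).const_mul c).add_const (c-1)
      exact (he.mul hp).div_const (c^2)
    have := h1.comp_ofReal
    convert this using 1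
    field_simp
    ring
  rw [intervalIntegral.integral_eq_sub_of_hasDerivAt key (by
    apply Continuous.intervalIntegrable; continuity)]
  simp only [Complex.ofReal_zero, Complex.ofReal_neg, Complex.ofReal_one, mul_zero, mul_neg,
    mul_one, Complex.exp_zero, one_mul, ← Complex.exp_neg]
  field_simp
  ring

lemma cont_aux (y : ℝ) : Continuous (fun x : ℝ =>
    Complex.exp (↑(-2 * Real.pi * x * y) * Complex.I) • (triangle x : ℂ)) := by
  apply Continuous.fun_smul
  · exact Complex.continuous_exp.comp ((Complex.continuous_ofReal.comp (by continuity)).mul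
      continuous_const)
  · exact Complex.continuous_ofReal.comp continuous_triangle

lemma ftri (y : ℝ) : FourierTransform.fourier (fun x : ℝ => (triangle x : ℂ)) y = ((sincSq y : ℝ) : ℂ) := by
  rw [Real.fourier_real_eq_integral_exp_smul]
  set g : ℝ → ℂ := fun x => Complex.exp (↑(-2 * Real.pi * x * y) * Complex.I) • (triangle x : ℂ) with hg
  set c : ℂ := ((-2 * Real.pi * y : ℝ) : ℂ) * Complex.I with hc
  have hgc : Continuous g := cont_aux y
  have h1 : ∫ x, g x = ∫ x in Set.Ioc (-1:ℝ) 1, g x := by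
    rw [← MeasureTheory.integral_indicator measurableSet_Ioc]
    congr 1; funext x
    by_cases hx : x ∈ Set.Ioc (-1:ℝ) 1
    · rw [Set.indicator_of_mem hx]
    · rw [Set.indicator_of_notMem hx]
      have habs : 1 ≤ |x| := by
        rw [Set.mem_Ioc] at hx; push_neg at hx
        rcases le_or_gt x (-1) with h | h
        · rw [abs_of_nonpos (by linarith)]; linarith
        · rw [abs_of_pos (by linarith [hx h])]; linarith [hx h]
      simp [hg, triangle_zero_of_one_le habs]
  have h2 : ∫ x in Set.Ioc (-1:ℝ) 1, g x = ∫ x in (-1:ℝ)..1, g x :=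
    (intervalIntegral.integral_of_le (by norm_num)).symm
  have h3 : ∫ x in (-1:ℝ)..1, g x = (∫ x in (-1:ℝ)..0, g x) + ∫ x in (0:ℝ)..1, g x :=
    (intervalIntegral.integral_add_adjacent_intervals
      (hgc.intervalIntegrable _ _) (hgc.intervalIntegrable _ _)).symm
  have hL : ∫ x in (-1:ℝ)..0, g x = ∫ x in (-1:ℝ)..0, Complex.exp (c*x) * (1 + x) := by
    apply intervalIntegral.integral_congr
    intro x hx
    rw [Set.uIcc_of_le (by norm_num)] at hx
    have h1 : |x| ≤ 1 := abs_le.2 ⟨hx.1, le_trans hx.2 zero_le_one⟩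
    have h2 : |x| = -x := abs_of_nonpos hx.2
    simp only [hg, triangle, if_pos h1, h2, smul_eq_mul]
    congr 2
    · rw [hc]; push_cast; ring
    · rw [if_pos (show -x ≤ 1 by linarith [hx.1])]; push_cast; ring
  have hR : ∫ x in (0:ℝ)..1, g x = ∫ x in (0:ℝ)..1, Complex.exp (c*x) * (1 - x) := by
    apply intervalIntegral.integral_congr
    intro x hx
    rw [Set.uIcc_of_le (by norm_num)] at hx
    have h1 : |x| ≤ 1 := abs_le.2 ⟨le_trans (by norm_num) hx.1, hx.2⟩
    have h2 : |x| = x := abs_of_nonneg hx.1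
    simp only [hg, triangle, if_pos h1, h2, smul_eq_mul]
    congr 2
    · rw [hc]; push_cast; ring
    · rw [if_pos hx.2]; push_cast; ring
  rw [h1, h2, h3, hL, hR]
  by_cases hy : y = 0
  · subst hy
    have hc0 : c = 0 := by simp [hc]
    simp only [hc0, zero_mul, Complex.exp_zero, one_mul]
    have e1 : ∫ x in (-1:ℝ)..0, (1 + (x:ℂ)) = ∫ x in (-1:ℝ)..0, ((1 + x : ℝ) : ℂ) := by
      norm_num
    have e2 : ∫ x in (0:ℝ)..1, (1 - (x:ℂ)) = ∫ x in (0:ℝ)..1, ((1 - x : ℝ) : ℂ) := by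
      norm_num
    rw [e1, e2, intervalIntegral.integral_ofReal, intervalIntegral.integral_ofReal]
    have r1 : ∫ x in (-1:ℝ)..0, (1 + x) = 1/2 := by
      rw [intervalIntegral.integral_add (intervalIntegrable_const)
        (intervalIntegral.intervalIntegrable_id)]
      simp
      norm_num
    have r2 : ∫ x in (0:ℝ)..1, (1 - x) = 1/2 := by
      rw [intervalIntegral.integral_sub (intervalIntegrable_const)
        (intervalIntegral.intervalIntegrable_id)]
      simp
      norm_num
    rw [r1, r2, sincSq, if_pos rfl]
    norm_num
  · have hπy : Real.pi * y ≠ 0 := mul_ne_zero Real.pi_ne_zero hy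
    have hθ : (2 * Real.pi * y) ≠ 0 := by
      simpa [mul_assoc] using mul_ne_zero two_ne_zero hπy
    have hcne : c ≠ 0 := by
      rw [hc]
      apply mul_ne_zero _ Complex.I_ne_zero
      simpa using (show (-2 * Real.pi * y) ≠ 0 by rw [neg_mul, neg_mul]; simpa [mul_assoc] using hθ)
    rw [int_tri_left hcne, int_tri_right hcne]
    have hexp : Complex.exp (-c) + Complex.exp c = 2 * ((Real.cos (2 * Real.pi * y) : ℝ) : ℂ) := by
      have e1 : c = ((-(2 * Real.pi * y) : ℝ) : ℂ) * Complex.I := by rw [hc]; push_cast; ring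
      have e2 : -c = (((2 * Real.pi * y) : ℝ) : ℂ) * Complex.I := by rw [hc]; push_cast; ring
      rw [e2, e1, Complex.exp_mul_I, Complex.exp_mul_I]
      rw [show ((-(2 * Real.pi * y) : ℝ) : ℂ) = -(((2 * Real.pi * y) : ℝ) : ℂ) by push_cast; ring]
      rw [Complex.cos_neg, Complex.sin_neg, ← Complex.ofReal_cos]
      ring
    have hc2 : c ^ 2 = -((((2 * Real.pi * y) : ℝ) : ℂ))^2 := by
      rw [hc, mul_pow, Complex.I_sq]
      push_cast
      ring
    have hreal : sincSq y = (2 * Real.cos (2 * Real.pi * y) - 2) / (-(2 * Real.pi * y)^2) := by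
      rw [sincSq, if_neg hy, div_pow, Real.sin_sq_eq_half_sub,
        show 2 * (Real.pi * y) = 2 * Real.pi * y by ring]
      field_simp
      ring
    rw [hreal, ← add_div,
      show (c - 1 + Complex.exp (-c) + (Complex.exp c - c - 1)) = Complex.exp (-c) + Complex.exp c - 2 by ring,
      hexp, hc2]
    push_cast
    field_simp

lemma ftriL {L : ℝ} (hL : 0 < L) (w : ℝ) :
    FourierTransform.fourier (fun x : ℝ => (triangle (x / L) : ℂ)) w
      = ((L * sincSq (w * L) : ℝ) : ℂ) := by
  rw [Real.fourier_real_eq_integral_exp_smul]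
  set G : ℝ → ℂ := fun u => Complex.exp (↑(-2 * Real.pi * u * (w * L)) * Complex.I) • (triangle u : ℂ) with hG
  have key : (fun x : ℝ => Complex.exp (↑(-2 * Real.pi * x * w) * Complex.I) • (triangle (x / L) : ℂ))
      = fun x : ℝ => G (x / L) := by
    funext x
    rw [hG]
    simp only
    congr 3
    rw [show -2 * Real.pi * (x / L) * (w * L) = -2 * Real.pi * x * w * (L / L) by ring,
      div_self hL.ne', mul_one]
  rw [key, MeasureTheory.Measure.integral_comp_div G L]
  have : ∫ u, G u = ((sincSq (w * L) : ℝ) : ℂ) := by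
    rw [← ftri (w * L), Real.fourier_real_eq_integral_exp_smul]
  rw [this, abs_of_pos hL]
  push_cast
  rw [Complex.real_smul]

open Filter Asymptotics in
lemma poisson_tri {L : ℝ} (hL : 0 < L) (c : ℝ) :
    ∑' j : ℤ, (triangle ((c + (j : ℝ)) / L) : ℂ)
      = ∑' k : ℤ, ((L * sincSq ((k : ℝ) * L) : ℝ) : ℂ) * eu ((k : ℝ) * c) := by
  set f : ℝ → ℂ := fun x => (triangle (x / L) : ℂ) with hf
  have hfc : Continuous f := Complex.continuous_ofReal.comp
    (continuous_triangle.comp (continuous_id.div_const L))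
  have hFf : ∀ k : ℝ, FourierTransform.fourier f k = ((L * sincSq (k * L) : ℝ) : ℂ) := ftriL hL
  have hsum : Summable fun k : ℤ => FourierTransform.fourier f k := by
    simp only [hFf]
    exact Complex.summable_ofReal.2 ((summable_sincSq hL).mul_left L)
  have hev : ∀ᶠ x in cocompact ℝ, f x = 0 := by
    filter_upwards [(isCompact_Icc (a := -L) (b := L)).compl_mem_cocompact] with x hx
    have : 1 ≤ |x / L| := by
      rw [Set.mem_compl_iff, Set.mem_Icc, not_and_or] at hx
      rw [abs_div, abs_of_pos hL, le_div_iff₀ hL, one_mul]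
      rcases hx with hx | hx
      · push_neg at hx; rw [abs_of_neg (by linarith)]; linarith
      · push_neg at hx; rw [abs_of_pos (by linarith)]; linarith
    simp [hf, triangle_zero_of_one_le this]
  have hdecay : f =O[cocompact ℝ] fun x : ℝ => |x| ^ (-(2:ℝ)) :=
    (isBigO_zero _ _).congr' (EventuallyEq.symm hev) (EventuallyEq.refl _ _)
  have := Real.tsum_eq_tsum_fourier_of_rpow_decay_of_summable hfc one_lt_two hdecay hsum c
  simp only [hf] at this
  rw [this]
  congr 1
  funext k
  rw [hFf]
  congr 1
  rw [fourier_coe_apply]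
  rw [eu]
  push_cast
  ring_nf

def intEquiv (d : ℕ) (hd : 1 ≤ d) (A : ℤ) : Fin d × ℤ ≃ ℤ where
  toFun p := (p.1 : ℤ) - A + d * p.2
  invFun m := (⟨((m + A) % d).toNat, by
      have hd0 : (0:ℤ) < d := by exact_mod_cast hd
      have h1 : 0 ≤ (m + A) % d := Int.emod_nonneg _ hd0.ne'
      have h2 : (m + A) % d < d := Int.emod_lt_of_pos _ hd0
      omega⟩, (m + A) / d)
  left_inv p := by
    obtain ⟨n, j⟩ := p
    have hd0 : (0:ℤ) < d := by exact_mod_cast hd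
    have hmA : ((n : ℤ) - A + d * j) + A = (n : ℤ) + d * j := by ring
    have hmod : ((n : ℤ) + d * j) % d = n := by
      rw [Int.add_mul_emod_self_left, Int.emod_eq_of_lt (by positivity) (by exact_mod_cast n.2)]
    have hdiv : ((n : ℤ) + d * j) / d = j := by
      rw [Int.add_mul_ediv_left _ _ hd0.ne', Int.ediv_eq_zero_of_lt (by positivity)
        (by exact_mod_cast n.2), zero_add]
    ext
    · simp only [hmA, hmod]
      omega
    · simp only [hmA, hdiv]
  right_inv m := by
    have hd0 : (0:ℤ) < d := by exact_mod_cast hd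
    have h1 : 0 ≤ (m + A) % d := Int.emod_nonneg _ hd0.ne'
    simp only [Int.toNat_of_nonneg h1]
    have := Int.emod_add_mul_ediv (m + A) d
    omega


set_option maxHeartbeats 1000000 in
/-- Poisson-summation identity:
`Σ_{m ∈ ℤ} e(h(A+m)²/d) f(m/M) = (M/d) Σ_{k ∈ ℤ} (sin(πkM/d)/(πkM/d))² e(-kA/d) G(h,k;d)`,
both sums converging absolutely, where `f` is the triangle function. -/
theorem poisson_summation_gauss (h A : ℤ) (d : ℕ) (hd : 1 ≤ d) (M : ℝ) (hM : 0 < M) :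
    Summable (fun m : ℤ =>
      ‖eu (((h * (A + m) ^ 2 : ℤ) : ℝ) / d) * (triangle ((m : ℝ) / M) : ℂ)‖) ∧
    Summable (fun k : ℤ =>
      ‖(sincSq ((k : ℝ) * M / d) : ℂ) * eu (-((k : ℝ) * A) / d) * gaussSum' h k d‖) ∧
    ∑' m : ℤ, eu (((h * (A + m) ^ 2 : ℤ) : ℝ) / d) * (triangle ((m : ℝ) / M) : ℂ) =
      ((M : ℂ) / d) *
        ∑' k : ℤ, (sincSq ((k : ℝ) * M / d) : ℂ) * eu (-((k : ℝ) * A) / d) *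
          gaussSum' h k d := by
  have hd0 : (0:ℝ) < d := by exact_mod_cast hd
  have hdR : (d:ℝ) ≠ 0 := hd0.ne'
  set L : ℝ := M / d with hLdef
  have hL : 0 < L := div_pos hM hd0
  set F : ℤ → ℂ := fun m => eu (((h * (A + m) ^ 2 : ℤ) : ℝ) / d) * (triangle ((m : ℝ) / M) : ℂ)
    with hF
  set R : ℤ → ℂ := fun k => (sincSq ((k : ℝ) * M / d) : ℂ) * eu (-((k : ℝ) * A) / d) *
    gaussSum' h k d with hR
  -- F vanishes off a finite set
  have hFzero : ∀ m : ℤ, m ∉ Finset.Icc (-(⌈M⌉ + 1)) (⌈M⌉ + 1) → F m = 0 := by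
    intro m hm
    rw [Finset.mem_Icc, not_and_or] at hm
    have hM' : M ≤ (⌈M⌉ : ℝ) + 1 := by
      have := Int.le_ceil M; push_cast; linarith
    have habs : 1 ≤ |(m : ℝ) / M| := by
      rw [abs_div, abs_of_pos hM, le_div_iff₀ hM, one_mul]
      rcases hm with hm | hm
      · push_neg at hm
        have : (m : ℝ) < -((⌈M⌉ : ℝ) + 1) := by exact_mod_cast hm
        rw [abs_of_neg (by linarith)]; linarith
      · push_neg at hm
        have : ((⌈M⌉ : ℝ) + 1) < m := by exact_mod_cast hm
        rw [abs_of_pos (by linarith)]; linarith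
    simp [hF, triangle_zero_of_one_le habs]
  have hFsummable : Summable F := summable_of_ne_finset_zero hFzero
  have part1 : Summable fun m : ℤ => ‖F m‖ :=
    summable_of_ne_finset_zero (fun m hm => by rw [hFzero m hm, norm_zero])
  -- norm of R
  have hRnorm : ∀ k : ℤ, ‖R k‖ ≤ sincSq ((k:ℝ) * L) * d := by
    intro k
    have hg : ‖gaussSum' h k d‖ ≤ d := by
      rw [gaussSum']
      calc ‖∑ n ∈ Finset.range d, eu (((h * n ^ 2 + k * n : ℤ) : ℝ) / d)‖
          ≤ ∑ n ∈ Finset.range d, ‖eu (((h * n ^ 2 + k * n : ℤ) : ℝ) / d)‖ := norm_sum_le _ _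
        _ = d := by simp only [eu_norm]; simp
    have harg : (k : ℝ) * M / d = (k:ℝ) * L := by rw [hLdef]; ring
    rw [hR]
    simp only [harg, norm_mul, eu_norm, mul_one, Complex.norm_real, Real.norm_eq_abs,
      abs_of_nonneg (sincSq_nonneg _)]
    exact mul_le_mul_of_nonneg_left hg (sincSq_nonneg _)
  have part2 : Summable fun k : ℤ => ‖R k‖ :=
    Summable.of_nonneg_of_le (fun k => norm_nonneg _) hRnorm
      ((summable_sincSq hL).mul_right (d:ℝ))
  refine ⟨part1, part2, ?_⟩
  set T : ℕ → ℂ := fun n => eu (((h * (n:ℤ)^2 : ℤ):ℝ)/d) *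
    ∑' j : ℤ, (triangle ((((n : ℝ) - (A:ℝ)) + (d:ℝ) * (j:ℝ)) / M) : ℂ) with hT
  -- summability of the per-n k-sums
  have hper : ∀ n : ℕ, Summable (fun k : ℤ =>
      (sincSq ((k : ℝ) * M / d) : ℂ) * eu ((k:ℝ) * (((n:ℝ) - (A:ℝ))/d))) := by
    intro n
    apply Summable.of_norm_bounded (summable_sincSq hL)
    intro k
    have harg : (k : ℝ) * M / d = (k:ℝ) * L := by rw [hLdef]; ring
    rw [norm_mul, eu_norm, mul_one, harg, Complex.norm_real, Real.norm_eq_abs,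
      abs_of_nonneg (sincSq_nonneg _)]
  have hB1 : ∀ k : ℤ, R k = ∑ n ∈ Finset.range d, eu (((h * (n:ℤ)^2 : ℤ):ℝ)/d) *
      ((sincSq ((k : ℝ) * M / d) : ℂ) * eu ((k:ℝ) * (((n:ℝ) - (A:ℝ))/d))) := by
    intro k
    rw [hR]
    simp only [gaussSum', Finset.mul_sum]
    apply Finset.sum_congr rfl
    intro n _
    rw [mul_assoc, ← eu_add,
      show (-((k:ℝ) * (A:ℝ)) / d + ((h * (n:ℕ) ^ 2 + k * (n:ℕ) : ℤ):ℝ)/d)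
        = ((h * (n:ℤ)^2 : ℤ):ℝ)/d + (k:ℝ) * (((n:ℝ) - (A:ℝ))/d) by push_cast; field_simp; ring,
      eu_add]
    ring
  have hB2 : ∑' k : ℤ, R k = ∑ n ∈ Finset.range d, eu (((h * (n:ℤ)^2 : ℤ):ℝ)/d) *
      ∑' k : ℤ, ((sincSq ((k : ℝ) * M / d) : ℂ) * eu ((k:ℝ) * (((n:ℝ) - (A:ℝ))/d))) := by
    rw [tsum_congr hB1, Summable.tsum_finsetSum (fun n _ => (hper n).mul_left _)]
    exact Finset.sum_congr rfl (fun n _ => tsum_mul_left)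
  have hB3 : ∀ n : ℕ, ((M:ℂ)/d) * ∑' k : ℤ,
      ((sincSq ((k : ℝ) * M / d) : ℂ) * eu ((k:ℝ) * (((n:ℝ) - (A:ℝ))/d)))
      = ∑' j : ℤ, (triangle ((((n : ℝ) - (A:ℝ)) + (d:ℝ) * (j:ℝ)) / M) : ℂ) := by
    intro n
    set c : ℝ := ((n:ℝ) - (A:ℝ))/d with hcdef
    rw [← tsum_mul_left]
    have key : ∀ k : ℤ, ((M:ℂ)/d) * ((sincSq ((k : ℝ) * M / d) : ℂ) * eu ((k:ℝ) * c))
        = ((L * sincSq ((k:ℝ)*L) : ℝ):ℂ) * eu ((k:ℝ)*c) := by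
      intro k
      have harg : (k : ℝ) * M / d = (k:ℝ)*L := by rw [hLdef]; ring
      have hMd : ((M:ℂ)/d) = ((L:ℝ):ℂ) := by rw [hLdef]; push_cast; ring
      rw [harg, hMd, Complex.ofReal_mul]
      ring
    rw [tsum_congr key, ← poisson_tri hL c]
    apply tsum_congr
    intro j
    congr 1
    rw [hcdef, hLdef]
    field_simp
  have claimB : ((M:ℂ)/d) * ∑' k : ℤ, R k = ∑ n ∈ Finset.range d, T n := by
    rw [hB2, Finset.mul_sum]
    apply Finset.sum_congr rfl
    intro n _
    rw [hT]
    simp only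
    rw [← hB3 n]
    ring
  set e : Fin d × ℤ ≃ ℤ := intEquiv d hd A with he
  have hc : ∀ (n : Fin d) (j : ℤ), F (e (n, j)) = eu (((h * ((n:ℕ):ℤ)^2 : ℤ):ℝ)/d) *
      (triangle (((((n:ℕ) : ℝ) - (A:ℝ)) + (d:ℝ) * (j:ℝ)) / M) : ℂ) := by
    intro n j
    have hev : e (n, j) = ((n:ℕ):ℤ) - A + d * j := rfl
    rw [hF]
    simp only [hev]
    congr 1
    · have key : (h * (A + (((n:ℕ):ℤ) - A + d*j))^2 : ℤ)
          = h * ((n:ℕ):ℤ)^2 + d * (h*(2*((n:ℕ):ℤ)*j + d*j^2)) := by ring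
      rw [key,
        show ((h * ((n:ℕ):ℤ)^2 + (d:ℤ) * (h*(2*((n:ℕ):ℤ)*j + (d:ℤ)*j^2)) : ℤ):ℝ)/d
          = ((h * ((n:ℕ):ℤ)^2 : ℤ):ℝ)/d + ((h*(2*((n:ℕ):ℤ)*j + (d:ℤ)*j^2) : ℤ):ℝ) by
            push_cast; field_simp]
      exact eu_add_int _ _
    · congr 1
      push_cast
      ring
  have claimA : ∑' m : ℤ, F m = ∑ n ∈ Finset.range d, T n := by
    have hsum' : Summable (fun p : Fin d × ℤ => F (e p)) := (e.summable_iff).2 hFsummable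
    rw [← Equiv.tsum_eq e F, Summable.tsum_prod' hsum' (fun n => hsum'.prod_factor n)]
    rw [tsum_fintype]
    have hstep : ∀ n : Fin d, ∑' j : ℤ, F (e (n, j)) = T (n : ℕ) := by
      intro n
      rw [tsum_congr (hc n), tsum_mul_left, hT]
    rw [Finset.sum_congr rfl (fun n _ => hstep n)]
    exact Fin.sum_univ_eq_sum_range (fun n => T n) d
  exact claimA.trans claimB.symm
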